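/- Let w : S^n → ℝ be defined by w(z) = Z(z) + Z(−z) where Z : S^n → ℝ is the support function of a compact convex body K ⊂ ℝ^{n+1} containing the origin. If w_max ≤ c₂·w_min for some c₂ ≥ 1, then the outer radius r_out and inner radius r_in of K satisfy r_out ≤ c₃·r_in for a constant c₃ depending only on n and c₂. -/

import Mathlib

open Metric Set

variable {E : Type*} [NormedAddCommGroup E] [InnerProductSpace ℝ E]

lemma farkas_over_compact {K : Set E} (hK : IsCompact K) (hKc : Convex ℝ K)
    (hne : K.Nonempty) {ι : Type*} (I : Finset ι) (u : ι → E) (β : ι → ℝ)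
    (hempty : ∀ x ∈ K, ∃ i ∈ I, β i < (inner ℝ (u i) x : ℝ)) :
    ∃ lam : ι → ℝ, (∀ i, 0 ≤ lam i) ∧ (∑ i ∈ I, lam i = 1) ∧
      ∀ x ∈ K, ∑ i ∈ I, lam i * β i < ∑ i ∈ I, lam i * (inner ℝ (u i) x : ℝ) := by
  classical
  set T : E → (↥I → ℝ) := fun x i => (inner ℝ (u i.1) x : ℝ) - β i.1 with hT
  set s : Set (↥I → ℝ) := T '' K with hs
  set t : Set (↥I → ℝ) := ⋂ i : ↥I, {y : ↥I → ℝ | y i ≤ 0} with ht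
  have hscomp : IsCompact s := by
    apply hK.image
    exact continuous_pi fun i => (continuous_const.inner continuous_id).sub continuous_const
  have hsconv : Convex ℝ s := by
    rintro _ ⟨x, hx, rfl⟩ _ ⟨y, hy, rfl⟩ a b ha hb hab
    refine ⟨a • x + b • y, hKc hx hy ha hb hab, funext fun i => ?_⟩
    show (inner ℝ (u i.1) (a • x + b • y) : ℝ) - β i.1
        = a * ((inner ℝ (u i.1) x : ℝ) - β i.1) + b * ((inner ℝ (u i.1) y : ℝ) - β i.1)
    rw [inner_add_right, real_inner_smul_right, real_inner_smul_right]
    linear_combination (β i.1) * hab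
  have htconv : Convex ℝ t := by
    apply convex_iInter
    intro i
    exact convex_halfSpace_le (LinearMap.isLinear (LinearMap.proj i)) 0
  have htclosed : IsClosed t := by
    apply isClosed_iInter
    intro i
    exact isClosed_le (continuous_apply i) continuous_const
  have hdisj : Disjoint t s := by
    rw [Set.disjoint_right]
    rintro _ ⟨x, hx, rfl⟩ hmem
    obtain ⟨i, hiI, hi⟩ := hempty x hx
    have := Set.mem_iInter.mp hmem ⟨i, hiI⟩
    simp only [hT, Set.mem_setOf_eq] at this
    linarith
  obtain ⟨f, c₁, c₂, hft, hc, hfs⟩ :=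
    geometric_hahn_banach_closed_compact htconv htclosed hsconv hscomp hdisj
  set lam0 : ↥I → ℝ := fun i => f (Pi.single i (1:ℝ)) with hlam0
  have hfy : ∀ y : ↥I → ℝ, f y = ∑ i : ↥I, y i * lam0 i := by
    intro y
    conv_lhs => rw [← Finset.univ_sum_single y]
    rw [map_sum]
    refine Finset.sum_congr rfl fun i _ => ?_
    have h1 : (Pi.single i (y i) : ↥I → ℝ) = (y i) • (Pi.single i (1:ℝ) : ↥I → ℝ) := by
      funext j
      by_cases h : j = i
      · subst h; simp
      · simp [Pi.single_apply, h]
    rw [h1, map_smul, smul_eq_mul, hlam0]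
  have h0t : (0 : ↥I → ℝ) ∈ t := by
    apply Set.mem_iInter.mpr
    intro i
    simp only [Set.mem_setOf_eq, Pi.zero_apply]
    exact le_refl 0
  have hc₁pos : 0 < c₁ := by
    have := hft 0 h0t
    simpa using this
  have hlam0nn : ∀ i, 0 ≤ lam0 i := by
    intro i
    by_contra h
    push_neg at h
    set y : ↥I → ℝ := Pi.single i (c₁ / lam0 i) with hy
    have hyt : y ∈ t := by
      apply Set.mem_iInter.mpr
      intro j
      simp only [Set.mem_setOf_eq, hy]
      rcases eq_or_ne j i with rfl | hji
      · simp only [Pi.single_eq_same]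
        exact le_of_lt (div_neg_of_pos_of_neg hc₁pos h)
      · simp [Pi.single_apply, hji]
    have hlt := hft y hyt
    rw [hfy] at hlt
    have hsum : ∑ j : ↥I, y j * lam0 j = c₁ := by
      rw [Finset.sum_eq_single i]
      · simp [hy, div_mul_cancel₀ _ (ne_of_lt h)]
      · intro j _ hji; simp [hy, Pi.single_apply, hji]
      · simp
    rw [hsum] at hlt
    exact lt_irrefl _ hlt
  obtain ⟨x₀, hx₀⟩ := hne
  have hfTx : ∀ x ∈ K, c₂ < ∑ i : ↥I, ((inner ℝ (u i.1) x : ℝ) - β i.1) * lam0 i := by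
    intro x hx
    have := hfs (T x) ⟨x, hx, rfl⟩
    rwa [hfy] at this
  set s₀ : ℝ := ∑ i : ↥I, lam0 i with hs₀
  have hs₀nn : 0 ≤ s₀ := Finset.sum_nonneg fun i _ => hlam0nn i
  have hs₀pos : 0 < s₀ := by
    rcases lt_or_eq_of_le hs₀nn with h | h
    · exact h
    exfalso
    have hall : ∀ i ∈ Finset.univ, lam0 i = (0:ℝ) :=
      (Finset.sum_eq_zero_iff_of_nonneg (fun i _ => hlam0nn i)).mp h.symm
    have := hfTx x₀ hx₀
    rw [Finset.sum_congr rfl (fun i hi => by rw [hall i hi, mul_zero])] at this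
    simp only [Finset.sum_const_zero] at this
    linarith
  set lam : ι → ℝ := fun i => if h : i ∈ I then lam0 ⟨i, h⟩ / s₀ else 0 with hlam
  have hlamcoe : ∀ i : ↥I, lam i.1 = lam0 i / s₀ := by
    intro i
    simp only [hlam, dif_pos i.2]
  refine ⟨lam, ?_, ?_, ?_⟩
  · intro i
    by_cases h : i ∈ I
    · simp only [hlam, dif_pos h]
      exact div_nonneg (hlam0nn _) hs₀nn
    · simp [hlam, dif_neg h]
  · rw [← Finset.sum_coe_sort I lam]
    rw [Finset.sum_congr rfl (fun i _ => hlamcoe i), ← Finset.sum_div]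
    rw [← hs₀, div_self hs₀pos.ne']
  · intro x hx
    have h1 : ∑ i : ↥I, lam0 i * β i.1 < ∑ i : ↥I, lam0 i * (inner ℝ (u i.1) x : ℝ) := by
      have h2 := hfTx x hx
      have h3 : ∑ i : ↥I, ((inner ℝ (u i.1) x : ℝ) - β i.1) * lam0 i
          = ∑ i : ↥I, lam0 i * (inner ℝ (u i.1) x : ℝ) - ∑ i : ↥I, lam0 i * β i.1 := by
        rw [← Finset.sum_sub_distrib]
        exact Finset.sum_congr rfl fun i _ => by ring
      rw [h3] at h2
      linarith
    have e1 : ∑ i ∈ I, lam i * β i = (∑ i : ↥I, lam0 i * β i.1) / s₀ := by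
      rw [← Finset.sum_coe_sort I (fun i => lam i * β i), Finset.sum_div]
      exact Finset.sum_congr rfl fun i _ => by rw [hlamcoe i]; ring
    have e2 : ∑ i ∈ I, lam i * (inner ℝ (u i) x : ℝ)
        = (∑ i : ↥I, lam0 i * (inner ℝ (u i.1) x : ℝ)) / s₀ := by
      rw [← Finset.sum_coe_sort I (fun i => lam i * (inner ℝ (u i) x : ℝ)), Finset.sum_div]
      exact Finset.sum_congr rfl fun i _ => by rw [hlamcoe i]; ring
    rw [e1, e2]
    exact (div_lt_div_iff_of_pos_right hs₀pos).mpr h1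

set_option maxHeartbeats 1000000


open Metric Set

/-- Corollary 1: if the width function `w(z) = Z(z) + Z(−z)` of a compact convex
body `K ⊂ ℝ^{n+1}` containing the origin satisfies `w_max ≤ c₂·w_min`, then
`r_out ≤ c₃·r_in` for a constant `c₃` depending only on `n` and `c₂`. -/
theorem stmt14 (n : ℕ) (c₂ : ℝ) (hc₂ : 1 ≤ c₂) :
    ∃ c₃ > 0, ∀ (K : Set (EuclideanSpace ℝ (Fin (n + 1))))
      (Z : EuclideanSpace ℝ (Fin (n + 1)) → ℝ) (rin rout : ℝ),
      IsCompact K → Convex ℝ K →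
      (0 : EuclideanSpace ℝ (Fin (n + 1))) ∈ K →
      (∀ z, Z z = sSup ((fun x => (inner ℝ z x : ℝ)) '' K)) →
      rout = sInf {R : ℝ | ∃ c, K ⊆ Metric.closedBall c R} →
      rin = sSup {R : ℝ | ∃ c, Metric.closedBall c R ⊆ K} →
      (∀ z z' : EuclideanSpace ℝ (Fin (n + 1)), ‖z‖ = 1 → ‖z'‖ = 1 →
        Z z + Z (-z) ≤ c₂ * (Z z' + Z (-z'))) →
      rout ≤ c₃ * rin := by
  classical
  have hc₂pos : (0:ℝ) < c₂ := lt_of_lt_of_le one_pos hc₂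
  refine ⟨2*(n+3)*c₂, by positivity, ?_⟩
  intro K Z rin rout hK hKc h0K hZ hrout hrin hpinch
  have hKne : K.Nonempty := ⟨0, h0K⟩
  -- basic facts about the support function
  have hcont : ∀ z : (EuclideanSpace ℝ (Fin (n + 1))), Continuous fun x : (EuclideanSpace ℝ (Fin (n + 1))) => (inner ℝ z x : ℝ) :=
    fun z => continuous_const.inner continuous_id
  have hbdd : ∀ z : (EuclideanSpace ℝ (Fin (n + 1))), BddAbove ((fun x => (inner ℝ z x : ℝ)) '' K) :=
    fun z => (hK.image (hcont z)).bddAbove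
  have himg : ∀ z : (EuclideanSpace ℝ (Fin (n + 1))), ((fun x => (inner ℝ z x : ℝ)) '' K).Nonempty :=
    fun z => hKne.image _
  have hle : ∀ z : (EuclideanSpace ℝ (Fin (n + 1))), ∀ x ∈ K, (inner ℝ z x : ℝ) ≤ Z z := by
    intro z x hx
    rw [hZ]
    exact le_csSup (hbdd z) ⟨x, hx, rfl⟩
  have hsup_le : ∀ (z : (EuclideanSpace ℝ (Fin (n + 1)))) (c : ℝ), (∀ x ∈ K, (inner ℝ z x : ℝ) ≤ c) → Z z ≤ c := by
    intro z c h
    rw [hZ]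
    refine csSup_le (himg z) ?_
    rintro _ ⟨x, hx, rfl⟩
    exact h x hx
  have hatt : ∀ z : (EuclideanSpace ℝ (Fin (n + 1))), ∃ x ∈ K, Z z = (inner ℝ z x : ℝ) := by
    intro z
    have hmem := (hK.image (hcont z)).sSup_mem (himg z)
    obtain ⟨x, hx, hxe⟩ := hmem
    exact ⟨x, hx, by rw [hZ]; exact hxe.symm⟩
  have hZ0 : ∀ z : (EuclideanSpace ℝ (Fin (n + 1))), 0 ≤ Z z := by
    intro z
    have := hle z 0 h0K
    simpa using this
  have hZadd : ∀ a b : (EuclideanSpace ℝ (Fin (n + 1))), Z (a + b) ≤ Z a + Z b := by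
    intro a b
    refine hsup_le _ _ fun x hx => ?_
    rw [inner_add_left]
    exact add_le_add (hle a x hx) (hle b x hx)
  have hZsmul : ∀ (c : ℝ) (a : (EuclideanSpace ℝ (Fin (n + 1)))), 0 ≤ c → Z (c • a) = c * Z a := by
    intro c a hc
    apply le_antisymm
    · refine hsup_le _ _ fun x hx => ?_
      rw [real_inner_smul_left]
      exact mul_le_mul_of_nonneg_left (hle a x hx) hc
    · obtain ⟨x, hx, he⟩ := hatt a
      have : c * Z a = (inner ℝ (c • a) x : ℝ) := by rw [real_inner_smul_left, he]
      rw [this]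
      exact hle _ x hx
  have hZzero : Z 0 = 0 := by
    apply le_antisymm
    · refine hsup_le _ _ fun x hx => ?_
      simp
    · have := hle 0 0 h0K
      simpa using this
  have hZsum : ∀ (J : Finset {u : (EuclideanSpace ℝ (Fin (n + 1))) // ‖u‖ = 1}) (g : {u : (EuclideanSpace ℝ (Fin (n + 1))) // ‖u‖ = 1} → (EuclideanSpace ℝ (Fin (n + 1)))),
      Z (∑ i ∈ J, g i) ≤ ∑ i ∈ J, Z (g i) := by
    intro J g
    induction J using Finset.cons_induction with
    | empty => simp [hZzero]
    | cons a s ha ih =>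
      rw [Finset.sum_cons, Finset.sum_cons]
      calc Z (g a + ∑ i ∈ s, g i) ≤ Z (g a) + Z (∑ i ∈ s, g i) := hZadd _ _
        _ ≤ Z (g a) + ∑ i ∈ s, Z (g i) := by linarith [ih]
  -- the outer radius bound
  obtain ⟨xm, hxmK, hxm⟩ := hK.exists_isMaxOn hKne continuous_norm.continuousOn
  set M := ‖xm‖ with hM
  have hMnn : (0:ℝ) ≤ M := norm_nonneg _
  have hKball : K ⊆ closedBall 0 M := by
    intro x hx
    have := hxm hx
    simpa [mem_closedBall, dist_eq_norm] using this
  have hroutM : rout ≤ M := by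
    rw [hrout]
    refine csInf_le ⟨0, ?_⟩ ⟨0, hKball⟩
    rintro R ⟨c, hc⟩
    have := hc h0K
    rw [mem_closedBall] at this
    exact le_trans dist_nonneg this
  -- the inner radius set is bounded above
  have hrinBdd : BddAbove {R : ℝ | ∃ c, closedBall c R ⊆ K} := by
    refine ⟨2 * M, ?_⟩
    rintro R ⟨c, hc⟩
    rcases le_or_gt R 0 with h | h
    · linarith
    · set e : (EuclideanSpace ℝ (Fin (n + 1))) := EuclideanSpace.single 0 1 with he
      have hen : ‖e‖ = 1 := by rw [he, EuclideanSpace.norm_single]; norm_num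
      have hcK : c ∈ K := hc (by simp [mem_closedBall, h.le])
      have hceK : c + R • e ∈ K := by
        apply hc
        rw [mem_closedBall, dist_eq_norm]
        simp [norm_smul, hen, abs_of_pos h]
      have h1 : ‖c‖ ≤ M := by
        have := hKball hcK; simpa [mem_closedBall, dist_eq_norm] using this
      have h2 : ‖c + R • e‖ ≤ M := by
        have := hKball hceK; simpa [mem_closedBall, dist_eq_norm] using this
      have h3 : ‖R • e‖ = R := by simp [norm_smul, hen, abs_of_pos h]
      have h4 : ‖R • e‖ ≤ ‖c + R • e‖ + ‖c‖ := by
        have := norm_sub_le (c + R • e) c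
        simpa using this
      linarith
  have hrin0 : (0:ℝ) ≤ rin := by
    rw [hrin]
    refine le_csSup hrinBdd ⟨0, ?_⟩
    intro x hx
    simp only [mem_closedBall, dist_le_zero] at hx
    rw [hx]; exact h0K
  rcases le_or_gt M 0 with hM0 | hM0
  · have : (0:ℝ) ≤ 2*(n+3)*c₂ * rin := by positivity
    linarith
  -- main case : M > 0
  set ρ := M / (2*(n+3)*c₂) with hρ
  have hρpos : 0 < ρ := by positivity
  have hMρ : M = 2*(n+3)*c₂*ρ := by rw [hρ]; field_simp
  -- the direction attaining the outer radius
  set u : (EuclideanSpace ℝ (Fin (n + 1))) := M⁻¹ • xm with hu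
  have hun : ‖u‖ = 1 := by
    rw [hu, norm_smul, Real.norm_eq_abs, abs_of_pos (inv_pos.mpr hM0), ← hM]
    field_simp
  have hZu : M ≤ Z u := by
    have h1 := hle u xm hxmK
    have h2 : (inner ℝ u xm : ℝ) = M := by
      rw [hu, real_inner_smul_left, real_inner_self_eq_norm_sq, ← hM]
      field_simp
    linarith
  have hwidth : ∀ z : (EuclideanSpace ℝ (Fin (n + 1))), ‖z‖ = 1 → 2*(n+3)*ρ ≤ Z z + Z (-z) := by
    intro z hz
    have h1 := hpinch u z hun hz
    have h2 : M ≤ Z u + Z (-u) := by linarith [hZ0 (-u)]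
    have h3 : M ≤ c₂ * (Z z + Z (-z)) := by linarith
    rw [hMρ] at h3
    nlinarith [hρpos]
  -- Helly's theorem applied to the inner parallel bodies
  set F : {u : (EuclideanSpace ℝ (Fin (n + 1))) // ‖u‖ = 1} → Set (EuclideanSpace ℝ (Fin (n + 1))) :=
    fun w => K ∩ {x | (inner ℝ w.1 x : ℝ) ≤ Z w.1 - ρ} with hF
  have hFconv : ∀ w, Convex ℝ (F w) := by
    intro w
    rw [hF]
    refine hKc.inter (convex_halfSpace_le ?_ _)
    exact ⟨fun x y => inner_add_right _ _ _, fun c x => real_inner_smul_right _ _ _⟩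
  have hFcomp : ∀ w, IsCompact (F w) := by
    intro w
    rw [hF]
    exact hK.inter_right (isClosed_le (hcont w.1) continuous_const)
  have hINE : ∀ I : Finset {u : (EuclideanSpace ℝ (Fin (n + 1))) // ‖u‖ = 1},
      I.card ≤ Module.finrank ℝ (EuclideanSpace ℝ (Fin (n + 1))) + 1 → (⋂ i ∈ I, F i).Nonempty := by
    intro I hIcard
    have hfr : Module.finrank ℝ (EuclideanSpace ℝ (Fin (n + 1))) = n + 1 := finrank_euclideanSpace_fin
    rw [hfr] at hIcard
    by_contra hIempty
    rw [Set.not_nonempty_iff_eq_empty] at hIempty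
    have hemp : ∀ x ∈ K, ∃ i ∈ I, (Z i.1 - ρ) < (inner ℝ i.1 x : ℝ) := by
      intro x hx
      by_contra h
      push_neg at h
      have hx' : x ∈ ⋂ i ∈ I, F i := by
        apply Set.mem_biInter
        intro i hi
        exact ⟨hx, h i hi⟩
      rw [hIempty] at hx'
      exact hx'
    obtain ⟨lam, hlnn, hlsum, hlt⟩ :=
      farkas_over_compact hK hKc hKne I (fun i => i.1) (fun i => Z i.1 - ρ) hemp
    have hIne : I.Nonempty := by
      rcases I.eq_empty_or_nonempty with h | h
      · rw [h] at hlsum; simp at hlsum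
      · exact h
    obtain ⟨j, hjI, hjmax⟩ := I.exists_max_image lam hIne
    have hcard1 : 1 ≤ (I.card : ℝ) * lam j := by
      have h1 : ∑ i ∈ I, lam i ≤ ∑ _i ∈ I, lam j :=
        Finset.sum_le_sum fun i hi => hjmax i hi
      rw [hlsum, Finset.sum_const, nsmul_eq_mul] at h1
      exact h1
    set v : (EuclideanSpace ℝ (Fin (n + 1))) := ∑ i ∈ I, lam i • (i.1 : (EuclideanSpace ℝ (Fin (n + 1)))) with hv
    have hZnegv : Z (-v) ≤ -(∑ i ∈ I, lam i * (Z i.1 - ρ)) := by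
      refine hsup_le _ _ fun x hx => ?_
      have h1 := hlt x hx
      have h2 : (inner ℝ v x : ℝ) = ∑ i ∈ I, lam i * (inner ℝ i.1 x : ℝ) := by
        rw [hv, sum_inner]
        exact Finset.sum_congr rfl fun i _ => real_inner_smul_left _ _ _
      have h3 : (inner ℝ (-v) x : ℝ) = -(inner ℝ v x : ℝ) := by rw [inner_neg_left]
      rw [h3, h2]
      linarith
    have hid : (lam j) • (-(j.1 : (EuclideanSpace ℝ (Fin (n + 1))))) = (∑ i ∈ I.erase j, lam i • (i.1 : (EuclideanSpace ℝ (Fin (n + 1))))) + (-v) := by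
      rw [smul_neg, hv, ← Finset.add_sum_erase I _ hjI]
      abel
    have hchain : lam j * Z (-(j.1 : (EuclideanSpace ℝ (Fin (n + 1))))) ≤ ρ - lam j * Z j.1 := by
      have e1 : lam j * Z (-(j.1 : (EuclideanSpace ℝ (Fin (n + 1))))) = Z ((lam j) • (-(j.1 : (EuclideanSpace ℝ (Fin (n + 1)))))) :=
        (hZsmul _ _ (hlnn j)).symm
      have e2 : Z ((∑ i ∈ I.erase j, lam i • (i.1 : (EuclideanSpace ℝ (Fin (n + 1))))) + (-v))
          ≤ Z (∑ i ∈ I.erase j, lam i • (i.1 : (EuclideanSpace ℝ (Fin (n + 1))))) + Z (-v) := hZadd _ _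
      have e3 : Z (∑ i ∈ I.erase j, lam i • (i.1 : (EuclideanSpace ℝ (Fin (n + 1)))))
          ≤ ∑ i ∈ I.erase j, lam i * Z i.1 := by
        refine le_trans (hZsum _ _) ?_
        exact le_of_eq (Finset.sum_congr rfl fun i _ => hZsmul _ _ (hlnn i))
      have e4 : ∑ i ∈ I, lam i * (Z i.1 - ρ)
          = lam j * Z j.1 + (∑ i ∈ I.erase j, lam i * Z i.1) - ρ := by
        have h5 : ∑ i ∈ I, lam i * (Z i.1 - ρ)
            = ∑ i ∈ I, lam i * Z i.1 - (∑ i ∈ I, lam i) * ρ := by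
          rw [Finset.sum_mul, ← Finset.sum_sub_distrib]
          exact Finset.sum_congr rfl fun i _ => by ring
        rw [h5, hlsum, ← Finset.add_sum_erase I (fun i => lam i * Z i.1) hjI]
        ring
      rw [e1, hid]
      have := le_trans e2 (by linarith [e3, hZnegv, e4.symm.le] :
        Z (∑ i ∈ I.erase j, lam i • (i.1 : (EuclideanSpace ℝ (Fin (n + 1))))) + Z (-v) ≤ ρ - lam j * Z j.1)
      exact this
    have hwj := hwidth j.1 j.2
    have hcard2 : (I.card : ℝ) ≤ (n:ℝ) + 2 := by
      have := hIcard
      exact_mod_cast Nat.cast_le.mpr this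
    have hlj : 0 ≤ lam j := hlnn j
    nlinarith [hcard1, hcard2, hwj, hchain, hρpos, hlj, hZ0 j.1, hZ0 (-(j.1:(EuclideanSpace ℝ (Fin (n + 1)))))]
  have hHelly := Convex.helly_theorem_compact' (𝕜 := ℝ) hFconv hFcomp hINE
  obtain ⟨xin, hxin⟩ := hHelly
  -- the ball of radius ρ around xin is contained in K
  have hball : closedBall xin ρ ⊆ K := by
    intro y hy
    by_contra hyK
    obtain ⟨f, b, hfK, hfy⟩ := geometric_hahn_banach_closed_point hKc hK.isClosed hyK
    obtain ⟨z, hzf⟩ : ∃ z : EuclideanSpace ℝ (Fin (n + 1)),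
        ∀ w : EuclideanSpace ℝ (Fin (n + 1)), f w = (inner ℝ z w : ℝ) := by
      refine ⟨(InnerProductSpace.toDual ℝ _).symm f, fun w => ?_⟩
      rw [← InnerProductSpace.toDual_apply_apply,
        (InnerProductSpace.toDual ℝ _).apply_symm_apply]
    have hfz0 : (0:ℝ) < b := by
      have := hfK 0 h0K
      simpa using this
    have hzne : z ≠ 0 := by
      intro h
      have := hzf y
      rw [h] at this
      simp at this
      linarith
    have hznorm : (0:ℝ) < ‖z‖ := norm_pos_iff.mpr hzne
    set w : (EuclideanSpace ℝ (Fin (n + 1))) := ‖z‖⁻¹ • z with hw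
    have hwn : ‖w‖ = 1 := by
      rw [hw, norm_smul, Real.norm_eq_abs, abs_of_pos (inv_pos.mpr hznorm)]
      field_simp
    have hZw : Z w ≤ b / ‖z‖ := by
      refine hsup_le _ _ fun x hx => ?_
      have h1 : f x < b := hfK x hx
      rw [hzf] at h1
      rw [hw, real_inner_smul_left]
      rw [div_eq_inv_mul]
      exact mul_le_mul_of_nonneg_left h1.le (by positivity)
    have hxinF := Set.mem_iInter.mp hxin ⟨w, hwn⟩
    obtain ⟨hxinK, hxinW⟩ := hxinF
    have hxinW' : (inner ℝ w xin : ℝ) ≤ Z w - ρ := hxinW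
    have hcs : (inner ℝ w (y - xin) : ℝ) ≤ ρ := by
      have h1 := real_inner_le_norm w (y - xin)
      have h2 : ‖y - xin‖ ≤ ρ := by
        rw [← dist_eq_norm]
        exact mem_closedBall.mp hy
      calc (inner ℝ w (y - xin) : ℝ) ≤ ‖w‖ * ‖y - xin‖ := h1
        _ = ‖y - xin‖ := by rw [hwn, one_mul]
        _ ≤ ρ := h2
    have hsplit : (inner ℝ w y : ℝ) = (inner ℝ w xin : ℝ) + (inner ℝ w (y - xin) : ℝ) := by
      rw [← inner_add_right]
      congr 1
      abel
    have hwyZ : (inner ℝ w y : ℝ) ≤ Z w := by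
      rw [hsplit]; linarith
    have hwyb : b / ‖z‖ < (inner ℝ w y : ℝ) := by
      have h1 : b < f y := hfy
      rw [hzf] at h1
      rw [hw, real_inner_smul_left, div_eq_inv_mul]
      exact mul_lt_mul_of_pos_left h1 (by positivity)
    linarith [hZw, hwyZ, hwyb]
  -- conclude
  have hrinρ : ρ ≤ rin := by
    rw [hrin]
    exact le_csSup hrinBdd ⟨xin, hball⟩
  have hfin : 2*(n+3)*c₂*ρ ≤ 2*(n+3)*c₂*rin := by
    apply mul_le_mul_of_nonneg_left hrinρ
    positivity
  calc rout ≤ M := hroutM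
    _ = 2*(n+3)*c₂*ρ := hMρ
    _ ≤ 2*(n+3)*c₂*rin := hfin
    _ = 2*(n+3)*c₂ * rin := by ring
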